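/- Wold-type decomposition for doubly commuting 2-isometries: let (T₁, T₂) be a pair of doubly commuting 2-isometries on a complex Hilbert space H. Define H₀₀ := ⋂_{m,n≥0} T₁^m T₂ⁿ(H); H₁₀ := (closed span of ⋃_{m≥0} T₁^m(ker T₁*)) ∩ (⋂_{n≥0} T₂ⁿ(H)); H₀₁ := (closed span of ⋃_{n≥0} T₂ⁿ(ker T₂*)) ∩ (⋂_{m≥0} T₁^m(H)); and H₁₁ := closed span of ⋃_{m,n≥0} T₁^m T₂ⁿ(ker T₁* ∩ ker T₂*). Then these four closed subspaces are mutually orthogonal, H = H₀₀ ⊕ H₁₀ ⊕ H₀₁ ⊕ H₁₁, each of them reduces both T₁ and T₂, T₁ and T₂ restrict to unitaries on H₀₀, T₂ restricts to a unitary on H₁₀ while T₁ restricts to an analytic 2-isometry on H₁₀, T₁ restricts to a unitary on H₀₁ while T₂ restricts to an analytic 2-isometry on H₀₁, and both T₁ and T₂ restrict to analytic 2-isometries on H₁₁. -/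

import Mathlib

open ContinuousLinearMap
open scoped ComplexInnerProductSpace


set_option linter.unusedSectionVars false
namespace Wold17

variable {H : Type*} [NormedAddCommGroup H] [InnerProductSpace ℂ H] [CompleteSpace H]

local notation "ad" => ContinuousLinearMap.adjoint

lemma quad_zero (A B : ℝ) (hA : 0 ≤ A) (h : ∀ t : ℝ, 0 ≤ t ^ 2 * A + 2 * t * B) : B = 0 := by
  have h1 := h (-(B / (A + 1)))
  have hA1 : (0:ℝ) < A + 1 := by linarith
  have h2' : 0 ≤ (B ^ 2 * A - 2 * B ^ 2 * (A + 1)) / (A + 1) ^ 2 := by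
    have : (-(B / (A + 1))) ^ 2 * A + 2 * (-(B / (A + 1))) * B
        = (B ^ 2 * A - 2 * B ^ 2 * (A + 1)) / (A + 1) ^ 2 := by
      field_simp; ring
    linarith [this ▸ h1]
  have h3 : 0 ≤ B ^ 2 * A - 2 * B ^ 2 * (A + 1) := by
    have := mul_nonneg h2' (le_of_lt (pow_pos hA1 2))
    rwa [div_mul_cancel₀ _ (ne_of_gt (pow_pos hA1 2))] at this
  nlinarith [sq_nonneg B]



section Helpers

lemma pow_apply (T : H →L[ℂ] H) (n : ℕ) (x : H) : (T ^ (n+1)) x = (T ^ n) (T x) := by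
  rw [pow_succ]; rfl

lemma pow_apply' (T : H →L[ℂ] H) (n : ℕ) (x : H) : (T ^ (n+1)) x = T ((T ^ n) x) := by
  rw [pow_succ']; rfl


lemma comm_pow (B C : H →L[ℂ] H) (hBC : ∀ x, B (C x) = C (B x)) :
    ∀ (n : ℕ) (x : H), B ((C ^ n) x) = (C ^ n) (B x) := by
  intro n
  induction n with
  | zero => intro x; simp
  | succ n ih =>
    intro x
    rw [pow_apply' C n x, hBC, ih, ← pow_apply' C n (B x)]

lemma mapSup {ι : Sort*} (B : H →L[ℂ] H) (p : ι → Submodule ℂ H) (N : Submodule ℂ H)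
    (h : ∀ i, ∀ z ∈ p i, B z ∈ N) : ∀ z ∈ (⨆ i, p i : Submodule ℂ H), B z ∈ N := by
  intro z hz
  refine Submodule.iSup_induction (motive := fun w => B w ∈ N) p hz h ?_ ?_
  · simpa using N.zero_mem
  · intro a b ha hb
    rw [map_add]
    exact N.add_mem ha hb

lemma mapClosure (B : H →L[ℂ] H) (M N : Submodule ℂ H) (h : ∀ z ∈ M, B z ∈ N) :
    ∀ z ∈ M.topologicalClosure, B z ∈ N.topologicalClosure := by
  intro z hz
  have h1 : z ∈ closure (M : Set H) := by
    rw [← Submodule.topologicalClosure_coe]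
    exact hz
  have h2 := map_mem_closure B.continuous h1 h
  rw [← SetLike.mem_coe, Submodule.topologicalClosure_coe]
  exact h2

lemma pow_mem (B : H →L[ℂ] H) (M : Submodule ℂ H) (h : ∀ z ∈ M, B z ∈ M) :
    ∀ (k : ℕ), ∀ z ∈ M, (B ^ k) z ∈ M := by
  intro k
  induction k with
  | zero => intro z hz; simpa using hz
  | succ k ih =>
    intro z hz
    rw [pow_apply' B k z]
    exact h _ (ih z hz)

lemma commR (S R : H →L[ℂ] H) (hRS : ∀ x, R (S x) = x) (hSR : ∀ x, S (R x) = x)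
    (B : H →L[ℂ] H) (hB : ∀ x, B (S x) = S (B x)) : ∀ x, B (R x) = R (B x) := by
  intro x
  calc B (R x) = R (S (B (R x))) := (hRS _).symm
  _ = R (B (S (R x))) := by rw [hB]
  _ = R (B x) := by rw [hSR]

end Helpers

section Single

variable (T : H →L[ℂ] H)

variable (h2 : ∀ h : H, ‖T (T h)‖ ^ 2 - 2 * ‖T h‖ ^ 2 + ‖h‖ ^ 2 = 0)
include h2

lemma diff_const (n : ℕ) (x : H) :
    ‖(T ^ (n+1)) x‖ ^ 2 - ‖(T ^ n) x‖ ^ 2 = ‖T x‖ ^ 2 - ‖x‖ ^ 2 := by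
  induction n with
  | zero => simp
  | succ n ih =>
    have h := h2 ((T ^ n) x)
    have e1 : (T ^ (n+1+1)) x = T (T ((T ^ n) x)) := by
      rw [pow_apply' T (n+1) x, pow_apply' T n x]
    have e2 : (T ^ (n+1)) x = T ((T ^ n) x) := pow_apply' T n x
    rw [e1, e2]
    rw [e2] at ih
    nlinarith [ih, h]

lemma norm_sq_pow (n : ℕ) (x : H) :
    ‖(T ^ n) x‖ ^ 2 = ‖x‖ ^ 2 + n * (‖T x‖ ^ 2 - ‖x‖ ^ 2) := by
  induction n with
  | zero => simp
  | succ n ih =>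
    have h := diff_const T h2 n x
    rw [Nat.cast_succ]
    nlinarith [h, ih]

lemma d_nonneg (x : H) : 0 ≤ ‖T x‖ ^ 2 - ‖x‖ ^ 2 := by
  by_contra hlt
  push_neg at hlt
  set d := ‖T x‖ ^ 2 - ‖x‖ ^ 2 with hd
  obtain ⟨n, hn⟩ := exists_nat_gt (‖x‖ ^ 2 / (-d))
  have h1 : 0 ≤ ‖(T ^ n) x‖ ^ 2 := sq_nonneg _
  rw [norm_sq_pow T h2 n x] at h1
  have hdpos : 0 < -d := by linarith
  have : ‖x‖ ^ 2 < n * (-d) := by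
    have hne : -d ≠ 0 := ne_of_gt hdpos
    calc ‖x‖ ^ 2 = (‖x‖ ^ 2 / (-d)) * (-d) := by rw [div_mul_cancel₀ _ hne]
    _ < n * (-d) := by exact mul_lt_mul_of_pos_right hn hdpos
  nlinarith

lemma norm_le_pow (n : ℕ) (x : H) : ‖x‖ ≤ ‖(T ^ n) x‖ := by
  have h1 := norm_sq_pow T h2 n x
  have h2' := d_nonneg T h2 x
  have : ‖x‖ ^ 2 ≤ ‖(T ^ n) x‖ ^ 2 := by nlinarith [Nat.cast_nonneg (α := ℝ) n]
  nlinarith [norm_nonneg x, norm_nonneg ((T ^ n) x)]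

lemma norm_le (x : H) : ‖x‖ ≤ ‖T x‖ := by
  simpa using norm_le_pow T h2 1 x

lemma inj : Function.Injective T := by
  intro a b hab
  have : ‖a - b‖ ≤ ‖T (a - b)‖ := norm_le T h2 _
  rw [map_sub, hab, sub_self, norm_zero] at this
  have := norm_nonneg (a - b)
  have hz : ‖a - b‖ = 0 := le_antisymm (by linarith) (by positivity)
  rwa [norm_eq_zero, sub_eq_zero] at hz

lemma isClosed_range_pow (n : ℕ) : IsClosed ((LinearMap.range (((T ^ n : H →L[ℂ] H) : H →ₗ[ℂ] H)) : Submodule ℂ H) : Set H) := by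
  have ha : AntilipschitzWith 1 (T ^ n) :=
    ContinuousLinearMap.antilipschitz_of_bound (T ^ n) (fun x => by
      simpa using norm_le_pow T h2 n x)
  exact ha.isClosed_range (T ^ n).uniformContinuous



lemma d_shift (n : ℕ) (w : H) :
    ‖T ((T ^ n) w)‖ ^ 2 - ‖(T ^ n) w‖ ^ 2 = ‖T w‖ ^ 2 - ‖w‖ ^ 2 := by
  rw [← pow_apply' T n w]
  exact diff_const T h2 n w

lemma U_pre (x : H) (hx : x ∈ ⨅ n : ℕ, LinearMap.range (((T ^ n : H →L[ℂ] H) : H →ₗ[ℂ] H))) :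
    ∃ y, y ∈ (⨅ n : ℕ, LinearMap.range (((T ^ n : H →L[ℂ] H) : H →ₗ[ℂ] H))) ∧ T y = x := by
  rw [Submodule.mem_iInf] at hx
  obtain ⟨y, hy⟩ := hx 1
  rw [pow_one] at hy
  refine ⟨y, ?_, hy⟩
  rw [Submodule.mem_iInf]
  intro n
  obtain ⟨w, hw⟩ := hx (n+1)
  have h : T ((T ^ n) w) = T y := by rw [ContinuousLinearMap.coe_coe] at hw hy; rw [← pow_apply' T n w, hw, hy]
  exact LinearMap.mem_range.mpr ⟨w, inj T h2 h⟩

lemma dU_zero (x : H) (hx : x ∈ ⨅ n : ℕ, LinearMap.range (((T ^ n : H →L[ℂ] H) : H →ₗ[ℂ] H))) :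
    ‖T x‖ ^ 2 - ‖x‖ ^ 2 = 0 := by
  rw [Submodule.mem_iInf] at hx
  have key : ∀ n : ℕ, (n : ℝ) * (‖T x‖ ^ 2 - ‖x‖ ^ 2) ≤ ‖x‖ ^ 2 := by
    intro n
    obtain ⟨y, hy⟩ := hx n
    have hn := norm_sq_pow T h2 n y
    rw [ContinuousLinearMap.coe_coe] at hy; rw [hy] at hn
    have hd : ‖T x‖ ^ 2 - ‖x‖ ^ 2 = ‖T y‖ ^ 2 - ‖y‖ ^ 2 := by
      rw [← hy]; exact d_shift T h2 n y
    rw [hd]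
    nlinarith [sq_nonneg ‖y‖]
  have hpos := d_nonneg T h2 x
  by_contra hne
  have hgt : 0 < ‖T x‖ ^ 2 - ‖x‖ ^ 2 := lt_of_le_of_ne hpos (Ne.symm hne)
  obtain ⟨n, hn⟩ := exists_nat_gt (‖x‖ ^ 2 / (‖T x‖ ^ 2 - ‖x‖ ^ 2))
  have := key n
  have h3 : ‖x‖ ^ 2 < (n : ℝ) * (‖T x‖ ^ 2 - ‖x‖ ^ 2) := by
    have hne2 : (‖T x‖ ^ 2 - ‖x‖ ^ 2) ≠ 0 := ne_of_gt hgt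
    calc ‖x‖ ^ 2 = ‖x‖ ^ 2 / (‖T x‖ ^ 2 - ‖x‖ ^ 2) * (‖T x‖ ^ 2 - ‖x‖ ^ 2) := by
          rw [div_mul_cancel₀ _ hne2]
    _ < n * (‖T x‖ ^ 2 - ‖x‖ ^ 2) := mul_lt_mul_of_pos_right hn hgt
  linarith

lemma isoU (x : H) (hx : x ∈ ⨅ n : ℕ, LinearMap.range (((T ^ n : H →L[ℂ] H) : H →ₗ[ℂ] H))) (w : H) :
    ⟪T x, T w⟫ = ⟪x, w⟫ := by
  have hd0 : ‖T x‖ ^ 2 - ‖x‖ ^ 2 = 0 := dU_zero T h2 x hx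
  set c : ℂ := ⟪T x, T w⟫ - ⟪x, w⟫ with hc
  have key : ∀ a : ℂ, 0 ≤ 2 * (a * c).re + ‖a‖ ^ 2 * (‖T w‖ ^ 2 - ‖w‖ ^ 2) := by
    intro a
    have e1 : T (x + a • w) = T x + a • T w := by rw [map_add, map_smul]
    have e2 : ‖T x + a • T w‖ ^ 2
        = ‖T x‖ ^ 2 + 2 * (a * ⟪T x, T w⟫).re + ‖a‖ ^ 2 * ‖T w‖ ^ 2 := by
      rw [@norm_add_sq ℂ, inner_smul_right, norm_smul]
      simp only [RCLike.re_to_complex]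
      ring
    have e3 : ‖x + a • w‖ ^ 2
        = ‖x‖ ^ 2 + 2 * (a * ⟪x, w⟫).re + ‖a‖ ^ 2 * ‖w‖ ^ 2 := by
      rw [@norm_add_sq ℂ, inner_smul_right, norm_smul]
      simp only [RCLike.re_to_complex]
      ring
    have h4 := d_nonneg T h2 (x + a • w)
    rw [e1] at h4
    rw [e2, e3] at h4
    have e5 : (a * c).re = (a * ⟪T x, T w⟫).re - (a * ⟪x, w⟫).re := by
      rw [hc, mul_sub, Complex.sub_re]
    rw [e5]
    nlinarith [h4, hd0]
  have hre : c.re = 0 := by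
    apply quad_zero (‖T w‖ ^ 2 - ‖w‖ ^ 2) c.re (d_nonneg T h2 w)
    intro t
    have := key (t : ℂ)
    have ha : ‖(t : ℂ)‖ ^ 2 = t ^ 2 := by
      rw [Complex.norm_real]; exact sq_abs t
    have hb : ((t : ℂ) * c).re = t * c.re := by
      simp [Complex.mul_re]
    rw [ha, hb] at this
    linarith
  have him : -c.im = 0 := by
    apply quad_zero (‖T w‖ ^ 2 - ‖w‖ ^ 2) (-c.im) (d_nonneg T h2 w)
    intro t
    have := key ((t : ℂ) * Complex.I)
    have ha : ‖(t : ℂ) * Complex.I‖ ^ 2 = t ^ 2 := by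
      rw [norm_mul, Complex.norm_I, mul_one, Complex.norm_real]; exact sq_abs t
    have hb : ((t : ℂ) * Complex.I * c).re = t * (-c.im) := by
      simp [Complex.mul_re]
    rw [ha, hb] at this
    linarith
  have : c = 0 := Complex.ext hre (by simpa using him)
  exact sub_eq_zero.mp (hc ▸ this)


lemma TU (x : H) (hx : x ∈ ⨅ n : ℕ, LinearMap.range (((T ^ n : H →L[ℂ] H) : H →ₗ[ℂ] H))) :
    T x ∈ ⨅ n : ℕ, LinearMap.range (((T ^ n : H →L[ℂ] H) : H →ₗ[ℂ] H)) := by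
  rw [Submodule.mem_iInf] at hx ⊢
  intro n
  obtain ⟨y, hy⟩ := hx n
  exact LinearMap.mem_range.mpr ⟨T y, by rw [ContinuousLinearMap.coe_coe] at hy ⊢; rw [← pow_apply T n y, pow_apply' T n y, hy]⟩

lemma adjU (x : H) (hx : x ∈ ⨅ n : ℕ, LinearMap.range (((T ^ n : H →L[ℂ] H) : H →ₗ[ℂ] H))) :
    (ad T) x ∈ (⨅ n : ℕ, LinearMap.range (((T ^ n : H →L[ℂ] H) : H →ₗ[ℂ] H))) ∧ T ((ad T) x) = x := by
  obtain ⟨y, hyU, hTy⟩ := U_pre T h2 x hx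
  have hxy : (ad T) x = y := by
    apply ext_inner_right ℂ
    intro v
    rw [ContinuousLinearMap.adjoint_inner_left, ← hTy]
    exact isoU T h2 y hyU v
  exact ⟨hxy ▸ hyU, by rw [hxy, hTy]⟩

lemma normU (x : H) (hx : x ∈ ⨅ n : ℕ, LinearMap.range (((T ^ n : H →L[ℂ] H) : H →ₗ[ℂ] H))) : ‖T x‖ = ‖x‖ := by
  have h := dU_zero T h2 x hx
  rw [← Real.sqrt_sq (norm_nonneg (T x)), ← Real.sqrt_sq (norm_nonneg x)]
  congr 1
  linarith

lemma adj_pow_U (x : H) (hx : x ∈ ⨅ n : ℕ, LinearMap.range (((T ^ n : H →L[ℂ] H) : H →ₗ[ℂ] H))) (n : ℕ) :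
    ((ad T ^ n) x ∈ ⨅ k : ℕ, LinearMap.range (((T ^ k : H →L[ℂ] H) : H →ₗ[ℂ] H))) ∧ (T ^ n) ((ad T ^ n) x) = x := by
  induction n with
  | zero => simpa using hx
  | succ n ih =>
    obtain ⟨hzU, hz⟩ := ih
    have e : (ad T ^ (n+1)) x = (ad T) ((ad T ^ n) x) := pow_apply' (ad T) n x
    obtain ⟨hU', hT'⟩ := adjU T h2 _ hzU
    constructor
    · rw [e]; exact hU'
    · rw [e, pow_apply T n, hT', hz]

lemma exists_sinv :
    ∃ R : H →L[ℂ] H, (∀ x, R ((ad T) (T x)) = x) ∧ (∀ x, (ad T) (T (R x)) = x) ∧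
      (∀ x y, ⟪R x, y⟫ = ⟪x, R y⟫) := by
  set S : H →L[ℂ] H := (ad T).comp T with hS
  have hSi : ∀ x y : H, ⟪S x, y⟫ = ⟪T x, T y⟫ := by
    intro x y
    rw [hS, ContinuousLinearMap.comp_apply, ContinuousLinearMap.adjoint_inner_left]
  have hSr : ∀ x y : H, ⟪x, S y⟫ = ⟪T x, T y⟫ := by
    intro x y
    rw [hS, ContinuousLinearMap.comp_apply, ContinuousLinearMap.adjoint_inner_right]
  have hlow : ∀ x : H, ‖x‖ ≤ ‖S x‖ := by
    intro x
    rcases eq_or_ne x 0 with h | h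
    · simp [h]
    have h1 : ‖x‖ ^ 2 ≤ ‖T x‖ ^ 2 := by nlinarith [d_nonneg T h2 x]
    have h2' : (⟪S x, x⟫ : ℂ).re = ‖T x‖ ^ 2 := by
      rw [hSi]
      have := inner_self_eq_norm_sq (𝕜 := ℂ) (T x)
      simp only [RCLike.re_to_complex] at this ⊢
      rw [← this]
    have h3 : ‖T x‖ ^ 2 ≤ ‖S x‖ * ‖x‖ := by
      rw [← h2']
      calc (⟪S x, x⟫ : ℂ).re ≤ ‖(⟪S x, x⟫ : ℂ)‖ := Complex.re_le_norm _
      _ ≤ ‖S x‖ * ‖x‖ := norm_inner_le_norm _ _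
    have hxpos : 0 < ‖x‖ := norm_pos_iff.mpr h
    nlinarith
  have hinj : Function.Injective S := by
    intro a b hab
    have : ‖a - b‖ ≤ ‖S (a - b)‖ := hlow _
    rw [map_sub, hab, sub_self, norm_zero] at this
    have hz : ‖a - b‖ = 0 := le_antisymm this (norm_nonneg _)
    rwa [norm_eq_zero, sub_eq_zero] at hz
  have hclosed : IsClosed (Set.range S) := by
    have ha : AntilipschitzWith 1 S :=
      ContinuousLinearMap.antilipschitz_of_bound S (fun x => by simpa using hlow x)
    exact ha.isClosed_range S.uniformContinuous
  have hsurj : Function.Surjective S := by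
    have hbot : (LinearMap.range (S : H →ₗ[ℂ] H))ᗮ = ⊥ := by
      rw [Submodule.eq_bot_iff]
      intro z hz
      have h0 : (⟪S z, z⟫ : ℂ) = 0 :=
        (Submodule.mem_orthogonal _ z).mp hz (S z) (LinearMap.mem_range_self _ z)
      have h1 : ‖T z‖ ^ 2 = 0 := by
        have := hSi z z
        rw [h0] at this
        have h2'' := inner_self_eq_norm_sq (𝕜 := ℂ) (T z)
        rw [← this] at h2''
        simpa using h2''.symm
      have h3 : ‖z‖ ≤ ‖T z‖ := norm_le T h2 z
      have : ‖z‖ = 0 := by nlinarith [norm_nonneg z, norm_nonneg (T z)]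
      rwa [norm_eq_zero] at this
    have hcl : (LinearMap.range (S : H →ₗ[ℂ] H)).topologicalClosure = LinearMap.range (S : H →ₗ[ℂ] H) := by
      apply le_antisymm
      · exact Submodule.topologicalClosure_minimal _ le_rfl (by rw [LinearMap.coe_range]; exact hclosed)
      · exact Submodule.le_topologicalClosure _
    have htop : LinearMap.range (S : H →ₗ[ℂ] H) = ⊤ := by
      have := Submodule.orthogonal_orthogonal_eq_closure (LinearMap.range (S : H →ₗ[ℂ] H))
      rw [hbot, Submodule.bot_orthogonal_eq_top, hcl] at this
      exact this.symm
    intro y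
    have : y ∈ LinearMap.range (S : H →ₗ[ℂ] H) := htop ▸ Submodule.mem_top
    exact this
  set e := LinearEquiv.ofBijective (S.toLinearMap)
    ⟨(by exact hinj : Function.Injective S.toLinearMap), (by exact hsurj)⟩ with he
  have hSe : ∀ y, S (e.symm y) = y := fun y => e.apply_symm_apply y
  have hbound : ∀ y, ‖e.symm y‖ ≤ 1 * ‖y‖ := by
    intro y
    have := hlow (e.symm y)
    rw [hSe y] at this
    linarith
  set R : H →L[ℂ] H := LinearMap.mkContinuous (e.symm : H →ₗ[ℂ] H) 1 hbound with hR
  have hRapp : ∀ y, R y = e.symm y := fun y => rfl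
  have hRS : ∀ x, R (S x) = x := by
    intro x
    rw [hRapp]
    exact e.symm_apply_apply x
  have hSR : ∀ x, S (R x) = x := by
    intro x
    rw [hRapp]
    exact hSe x
  refine ⟨R, ?_, ?_, ?_⟩
  · intro x; exact hRS x
  · intro x; exact hSR x
  · intro x y
    calc ⟪R x, y⟫ = ⟪R x, S (R y)⟫ := by rw [hSR]
    _ = ⟪T (R x), T (R y)⟫ := hSr _ _
    _ = ⟪S (R x), R y⟫ := (hSi _ _).symm
    _ = ⟪x, R y⟫ := by rw [hSR]


lemma core (x : H) (v e : ℕ → H)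
    (hv0 : v 0 = x)
    (he : ∀ k, (ad T) (e k) = 0)
    (hrec : ∀ k, v k = T (v (k+1)) + e k)
    (hperp : ∀ k, ⟪x, (T ^ k) (e k)⟫ = 0) :
    ∀ m : ℕ, x ∈ LinearMap.range (((T ^ m : H →L[ℂ] H) : H →ₗ[ℂ] H)) := by
  set dd : ℕ → ℝ := fun k => ‖T (v k)‖ ^ 2 - ‖v k‖ ^ 2 with hdd
  have hdd0 : ∀ k, 0 ≤ dd k := fun k => d_nonneg T h2 (v k)
  have horth : ∀ k, (⟪T (v (k+1)), e k⟫ : ℂ) = 0 := by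
    intro k
    rw [← ContinuousLinearMap.adjoint_inner_right, he k, inner_zero_right]
  have step1 : ∀ k, ‖v k‖ ^ 2 = ‖v (k+1)‖ ^ 2 + dd (k+1) + ‖e k‖ ^ 2 := by
    intro k
    have h1 := norm_add_sq_eq_norm_sq_add_norm_sq_of_inner_eq_zero (T (v (k+1))) (e k) (horth k)
    rw [hrec k]
    simp only [hdd]
    nlinarith [h1]
  have hsum : ∀ n, ‖x‖ ^ 2 = ‖v n‖ ^ 2 + ∑ k ∈ Finset.range n, (dd (k+1) + ‖e k‖ ^ 2) := by
    intro n
    induction n with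
    | zero => simp [hv0]
    | succ n ih =>
      rw [Finset.sum_range_succ, ih, step1 n]
      ring
  have hvle : ∀ n, ‖v n‖ ^ 2 ≤ ‖x‖ ^ 2 := by
    intro n
    have h := hsum n
    have : 0 ≤ ∑ k ∈ Finset.range n, (dd (k+1) + ‖e k‖ ^ 2) :=
      Finset.sum_nonneg (fun k _ => add_nonneg (hdd0 _) (sq_nonneg _))
    linarith
  have hdsum : ∀ n, ∑ k ∈ Finset.range n, dd (k+1) ≤ ‖x‖ ^ 2 := by
    intro n
    have h := hsum n
    have h1 : ∑ k ∈ Finset.range n, dd (k+1) ≤ ∑ k ∈ Finset.range n, (dd (k+1) + ‖e k‖ ^ 2) :=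
      Finset.sum_le_sum (fun k _ => le_add_of_nonneg_right (sq_nonneg _))
    nlinarith [sq_nonneg ‖v n‖]
  have hsmall : ∀ m : ℕ, ∀ ε : ℝ, 0 < ε → ∃ n, m ≤ n ∧ (n : ℝ) * dd n ≤ ε := by
    intro m ε hε
    by_contra hcon
    push_neg at hcon
    have hterm : ∀ k, m ≤ k → ε / ((k : ℝ) + 1) ≤ dd (k + 1) := by
      intro k hk
      have h := hcon (k+1) (le_trans hk (Nat.le_succ k))
      have hkpos : (0 : ℝ) < (k : ℝ) + 1 := by positivity
      rw [div_le_iff₀ hkpos]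
      push_cast at h
      nlinarith
    have hIco : ∀ N, m ≤ N → ε * ((∑ k ∈ Finset.range N, (1 : ℝ) / (k + 1))
        - ∑ k ∈ Finset.range m, (1 : ℝ) / (k + 1)) ≤ ‖x‖ ^ 2 := by
      intro N hN
      have h1 : ∑ k ∈ Finset.Ico m N, ε / ((k : ℝ) + 1) ≤ ∑ k ∈ Finset.Ico m N, dd (k+1) := by
        apply Finset.sum_le_sum
        intro k hk
        exact hterm k (Finset.mem_Ico.mp hk).1
      have h2' : ∑ k ∈ Finset.Ico m N, dd (k+1) ≤ ∑ k ∈ Finset.range N, dd (k+1) := by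
        apply Finset.sum_le_sum_of_subset_of_nonneg
        · intro k hk
          rw [Finset.mem_range]
          exact (Finset.mem_Ico.mp hk).2
        · intro k _ _
          exact hdd0 _
      have h3 : ∑ k ∈ Finset.Ico m N, ε / ((k : ℝ) + 1)
          = ε * ∑ k ∈ Finset.Ico m N, (1:ℝ) / ((k:ℝ) + 1) := by
        rw [Finset.mul_sum]
        apply Finset.sum_congr rfl
        intro k _
        ring
      have h4 : ∑ k ∈ Finset.Ico m N, (1:ℝ) / ((k:ℝ) + 1)
          = (∑ k ∈ Finset.range N, (1:ℝ)/(k + 1)) - ∑ k ∈ Finset.range m, (1:ℝ)/(k + 1) :=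
        Finset.sum_Ico_eq_sub _ hN
      rw [← h4, ← h3]
      linarith [hdsum N]
    obtain ⟨N, hN1, hN2⟩ : ∃ N, m ≤ N ∧ (‖x‖^2/ε + ∑ k ∈ Finset.range m, (1:ℝ)/(k+1))
        < ∑ k ∈ Finset.range N, (1:ℝ)/(k+1) := by
      have h := Real.tendsto_sum_range_one_div_nat_succ_atTop
      have hev := (h.eventually_gt_atTop
        (‖x‖^2/ε + ∑ k ∈ Finset.range m, (1:ℝ)/(k+1))).and (Filter.eventually_ge_atTop m)
      obtain ⟨N, hN⟩ := hev.exists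
      exact ⟨N, hN.2, hN.1⟩
    have hle := hIco N hN1
    have h5 : ‖x‖^2/ε < (∑ k ∈ Finset.range N, (1:ℝ)/(k+1)) - ∑ k ∈ Finset.range m, (1:ℝ)/(k+1) := by
      linarith
    have hgt : ‖x‖^2 < ε * ((∑ k ∈ Finset.range N, (1:ℝ)/(k+1)) - ∑ k ∈ Finset.range m, (1:ℝ)/(k+1)) := by
      calc ‖x‖^2 = ε * (‖x‖^2/ε) := by field_simp
      _ < _ := mul_lt_mul_of_pos_left h5 hε
    linarith
  -- main body
  have hdecomp : ∀ n, x = (∑ k ∈ Finset.range n, (T ^ k) (e k)) + (T ^ n) (v n) := by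
    intro n
    induction n with
    | zero => simp [hv0]
    | succ n ih =>
      rw [Finset.sum_range_succ]
      have h1 : (T ^ n) (v n) = (T ^ (n+1)) (v (n+1)) + (T ^ n) (e n) := by
        rw [hrec n, map_add, pow_apply T n (v (n+1))]
      rw [ih, h1]
      abel
  have hxinner : ∀ n, (⟪x, (T ^ n) (v n)⟫ : ℂ) = ⟪x, x⟫ := by
    intro n
    have h1 : (⟪x, x⟫ : ℂ)
        = ⟪x, (∑ k ∈ Finset.range n, (T ^ k) (e k)) + (T ^ n) (v n)⟫ :=
      congrArg (fun z => (⟪x, z⟫ : ℂ)) (hdecomp n)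
    rw [inner_add_right, inner_sum] at h1
    rw [Finset.sum_congr rfl (fun k _ => hperp k), Finset.sum_const_zero, zero_add] at h1
    exact h1.symm
  intro m
  rcases eq_or_ne x 0 with hx0 | hx0
  · rw [hx0]; exact Submodule.zero_mem _
  haveI : CompleteSpace (LinearMap.range (((T ^ m : H →L[ℂ] H) : H →ₗ[ℂ] H))) := (isClosed_range_pow T h2 m).completeSpace_coe
  set K : Submodule ℂ H := LinearMap.range (((T ^ m : H →L[ℂ] H) : H →ₗ[ℂ] H)) with hK
  set q : H := (Submodule.orthogonalProjectionOnto K x : H) with hq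
  have hqK : q ∈ K := SetLike.coe_mem _
  have hxq : x - q ∈ Kᗮ := Submodule.sub_starProjection_mem_orthogonal x
  have hzmem : ∀ n, m ≤ n → (T ^ n) (v n) ∈ K := by
    intro n hn
    obtain ⟨k, hk⟩ := Nat.exists_eq_add_of_le hn
    rw [hK]
    refine LinearMap.mem_range.mpr ⟨(T ^ k) (v n), ?_⟩
    rw [ContinuousLinearMap.coe_coe, ← ContinuousLinearMap.comp_apply, ← ContinuousLinearMap.mul_def, ← pow_add, ← hk]
  have hkey : ∀ ε : ℝ, 0 < ε → ‖x‖^2 * ‖x‖^2 ≤ ‖q‖^2 * ‖x‖^2 + ‖q‖^2 * ε := by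
    intro ε hε
    obtain ⟨n, hn1, hn2⟩ := hsmall m ε hε
    have hzn : ‖(T ^ n) (v n)‖^2 ≤ ‖x‖^2 + ε := by
      have h := norm_sq_pow T h2 n (v n)
      have := hvle n
      have : ‖(T ^ n) (v n)‖^2 = ‖v n‖^2 + (n:ℝ) * dd n := h
      nlinarith [hvle n]
    have hinner1 : (⟪x, (T ^ n) (v n)⟫ : ℂ) = ⟪q, (T ^ n) (v n)⟫ := by
      have h0 : (⟪x - q, (T ^ n) (v n)⟫ : ℂ) = 0 :=
        Submodule.inner_left_of_mem_orthogonal (hzmem n hn1) hxq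
      rw [inner_sub_left] at h0
      linear_combination h0
    have hnorm1 : ‖x‖^2 = ‖(⟪x, x⟫ : ℂ)‖ := by
      rw [inner_self_eq_norm_sq_to_K (𝕜 := ℂ)]
      simp [norm_pow]
    have hchain : ‖x‖^2 ≤ ‖q‖ * ‖(T ^ n) (v n)‖ := by
      rw [hnorm1, ← hxinner n, hinner1]
      exact norm_inner_le_norm _ _
    have hzn' : 0 ≤ ‖(T ^ n) (v n)‖ := norm_nonneg _
    nlinarith [norm_nonneg q, norm_nonneg x, sq_nonneg (‖x‖^2)]
  have hfin : ‖x‖^2 * ‖x‖^2 ≤ ‖q‖^2 * ‖x‖^2 := by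
    apply le_of_forall_pos_le_add
    intro ε' hε'
    have hp : (0:ℝ) < ε' / (‖q‖^2 + 1) := by positivity
    have := hkey (ε' / (‖q‖^2 + 1)) hp
    have hql : ‖q‖^2 * (ε' / (‖q‖^2 + 1)) ≤ ε' := by
      rw [div_eq_mul_inv]
      have h1 : ‖q‖^2 ≤ ‖q‖^2 + 1 := by linarith
      have h2' : (0:ℝ) < ‖q‖^2 + 1 := by positivity
      calc ‖q‖^2 * (ε' * (‖q‖^2 + 1)⁻¹) = ε' * (‖q‖^2 / (‖q‖^2+1)) := by ring
      _ ≤ ε' * 1 := by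
            apply mul_le_mul_of_nonneg_left _ (le_of_lt hε')
            rw [div_le_one h2']
            linarith
      _ = ε' := mul_one _
    linarith
  have hxpos : 0 < ‖x‖^2 := by
    have : 0 < ‖x‖ := norm_pos_iff.mpr hx0
    positivity
  have hqx : ‖x‖^2 ≤ ‖q‖^2 :=
    le_of_mul_le_mul_right (by linarith [hfin]) hxpos
  have hpyth : ‖x‖^2 = ‖q‖^2 + ‖x - q‖^2 := by
    have hd : q + (x - q) = x := by abel
    have hio : (⟪q, x - q⟫ : ℂ) = 0 :=
      Submodule.inner_right_of_mem_orthogonal hqK hxq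
    have hps := norm_add_sq_eq_norm_sq_add_norm_sq_of_inner_eq_zero q (x - q) hio
    rw [hd] at hps
    nlinarith [hps]
  have hzero : ‖x - q‖^2 ≤ 0 := by linarith
  have : x - q = 0 := by
    have h0 : ‖x - q‖ = 0 := by nlinarith [norm_nonneg (x - q), sq_nonneg ‖x-q‖]
    rwa [norm_eq_zero] at h0
  have : x = q := by rwa [sub_eq_zero] at this
  rw [this]
  exact hqK

end Single


lemma core_vmem (T R : H →L[ℂ] H) (M : Submodule ℂ H)
    (hA : ∀ z ∈ M, (ad T) z ∈ M) (hR : ∀ z ∈ M, R z ∈ M) (x : H) (hx : x ∈ M) :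
    ∀ k : ℕ, (((R ∘L (ad T)) ^ k) x) ∈ M := by
  intro k
  induction k with
  | zero => simpa using hx
  | succ k ih =>
    rw [pow_apply' (R ∘L (ad T)) k x]
    exact hR _ (hA _ ih)

lemma core_eker (T R : H →L[ℂ] H) (hSR : ∀ x, (ad T) (T (R x)) = x) (x : H) (k : ℕ) :
    (ad T) ((((R ∘L (ad T)) ^ k) x) - T (((R ∘L (ad T)) ^ (k+1)) x)) = 0 := by
  rw [map_sub]
  rw [show (((R ∘L (ad T)) ^ (k+1)) x) = R ((ad T) (((R ∘L (ad T)) ^ k) x)) from by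
    rw [pow_apply' (R ∘L (ad T)) k x]; rfl]
  rw [hSR, sub_self]

lemma core_run (T : H →L[ℂ] H)
    (h2 : ∀ h : H, ‖T (T h)‖ ^ 2 - 2 * ‖T h‖ ^ 2 + ‖h‖ ^ 2 = 0)
    (R : H →L[ℂ] H) (hSR : ∀ x, (ad T) (T (R x)) = x) (x : H)
    (hp : ∀ k : ℕ,
      (⟪x, (T ^ k) ((((R ∘L (ad T)) ^ k) x) - T (((R ∘L (ad T)) ^ (k+1)) x))⟫ : ℂ) = 0) :
    ∀ m : ℕ, x ∈ LinearMap.range (((T ^ m : H →L[ℂ] H) : H →ₗ[ℂ] H)) := by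
  apply core T h2 x (fun k => ((R ∘L (ad T)) ^ k) x)
    (fun k => (((R ∘L (ad T)) ^ k) x) - T (((R ∘L (ad T)) ^ (k+1)) x))
  · simp
  · intro k
    exact core_eker T R hSR x k
  · intro k
    simp
  · exact hp

end Wold17

set_option maxHeartbeats 1600000 in
open Wold17 in
/-- **Wold-type decomposition for doubly commuting 2-isometries.**
With `H₀₀ = ⋂_{m,n} T₁^m T₂ⁿ(H)`,
`H₁₀ = (span closure of ⋃ₘ T₁^m(ker T₁*)) ∩ ⋂ₙ T₂ⁿ(H)`,
`H₀₁ = (span closure of ⋃ₙ T₂ⁿ(ker T₂*)) ∩ ⋂ₘ T₁^m(H)`, and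
`H₁₁ = span closure of ⋃_{m,n} T₁^m T₂ⁿ(ker T₁* ∩ ker T₂*)`,
these four subspaces are mutually orthogonal, fill out `H`, jointly reduce
`T₁` and `T₂`, and the restrictions are unitary/analytic as indicated. -/
theorem doublyCommuting_twoIsometries_wold_type_decomposition
    {H : Type*} [NormedAddCommGroup H] [InnerProductSpace ℂ H] [CompleteSpace H]
    (T₁ T₂ : H →L[ℂ] H)
    (h2iso₁ : ∀ h : H, ‖T₁ (T₁ h)‖ ^ 2 - 2 * ‖T₁ h‖ ^ 2 + ‖h‖ ^ 2 = 0)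
    (h2iso₂ : ∀ h : H, ‖T₂ (T₂ h)‖ ^ 2 - 2 * ‖T₂ h‖ ^ 2 + ‖h‖ ^ 2 = 0)
    (hcomm : T₁ ∘L T₂ = T₂ ∘L T₁)
    (hdcomm : T₁ ∘L adjoint T₂ = adjoint T₂ ∘L T₁) :
    ∀ H₀₀ H₁₀ H₀₁ H₁₁ : Submodule ℂ H,
      H₀₀ = (⨅ p : ℕ × ℕ, LinearMap.range (((T₁ ^ p.1) ∘L (T₂ ^ p.2) : H →L[ℂ] H) : H →ₗ[ℂ] H)) →
      H₁₀ = (⨆ m : ℕ, (LinearMap.ker ((adjoint T₁ : H →L[ℂ] H) : H →ₗ[ℂ] H)).map ((T₁ ^ m : H →L[ℂ] H) : H →ₗ[ℂ] H)).topologicalClosure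
              ⊓ (⨅ n : ℕ, LinearMap.range ((T₂ ^ n : H →L[ℂ] H) : H →ₗ[ℂ] H)) →
      H₀₁ = (⨆ n : ℕ, (LinearMap.ker ((adjoint T₂ : H →L[ℂ] H) : H →ₗ[ℂ] H)).map ((T₂ ^ n : H →L[ℂ] H) : H →ₗ[ℂ] H)).topologicalClosure
              ⊓ (⨅ m : ℕ, LinearMap.range ((T₁ ^ m : H →L[ℂ] H) : H →ₗ[ℂ] H)) →
      H₁₁ = (⨆ p : ℕ × ℕ,
              (LinearMap.ker ((adjoint T₁ : H →L[ℂ] H) : H →ₗ[ℂ] H) ⊓ LinearMap.ker ((adjoint T₂ : H →L[ℂ] H) : H →ₗ[ℂ] H)).map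
                (((T₁ ^ p.1) ∘L (T₂ ^ p.2) : H →L[ℂ] H) : H →ₗ[ℂ] H)).topologicalClosure →
      -- mutual orthogonality
      (∀ x ∈ H₀₀, ∀ y ∈ H₁₀, ⟪x, y⟫ = 0) ∧
      (∀ x ∈ H₀₀, ∀ y ∈ H₀₁, ⟪x, y⟫ = 0) ∧
      (∀ x ∈ H₀₀, ∀ y ∈ H₁₁, ⟪x, y⟫ = 0) ∧
      (∀ x ∈ H₁₀, ∀ y ∈ H₀₁, ⟪x, y⟫ = 0) ∧
      (∀ x ∈ H₁₀, ∀ y ∈ H₁₁, ⟪x, y⟫ = 0) ∧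
      (∀ x ∈ H₀₁, ∀ y ∈ H₁₁, ⟪x, y⟫ = 0) ∧
      -- the four pieces fill out H
      H₀₀ ⊔ H₁₀ ⊔ H₀₁ ⊔ H₁₁ = ⊤ ∧
      -- each piece reduces both T₁ and T₂
      (∀ x ∈ H₀₀, T₁ x ∈ H₀₀) ∧ (∀ x ∈ H₀₀, adjoint T₁ x ∈ H₀₀) ∧
      (∀ x ∈ H₀₀, T₂ x ∈ H₀₀) ∧ (∀ x ∈ H₀₀, adjoint T₂ x ∈ H₀₀) ∧
      (∀ x ∈ H₁₀, T₁ x ∈ H₁₀) ∧ (∀ x ∈ H₁₀, adjoint T₁ x ∈ H₁₀) ∧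
      (∀ x ∈ H₁₀, T₂ x ∈ H₁₀) ∧ (∀ x ∈ H₁₀, adjoint T₂ x ∈ H₁₀) ∧
      (∀ x ∈ H₀₁, T₁ x ∈ H₀₁) ∧ (∀ x ∈ H₀₁, adjoint T₁ x ∈ H₀₁) ∧
      (∀ x ∈ H₀₁, T₂ x ∈ H₀₁) ∧ (∀ x ∈ H₀₁, adjoint T₂ x ∈ H₀₁) ∧
      (∀ x ∈ H₁₁, T₁ x ∈ H₁₁) ∧ (∀ x ∈ H₁₁, adjoint T₁ x ∈ H₁₁) ∧
      (∀ x ∈ H₁₁, T₂ x ∈ H₁₁) ∧ (∀ x ∈ H₁₁, adjoint T₂ x ∈ H₁₁) ∧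
      -- T₁ and T₂ are unitary on H₀₀
      (∀ x ∈ H₀₀, ‖T₁ x‖ = ‖x‖) ∧ H₀₀.map (T₁ : H →ₗ[ℂ] H) = H₀₀ ∧
      (∀ x ∈ H₀₀, ‖T₂ x‖ = ‖x‖) ∧ H₀₀.map (T₂ : H →ₗ[ℂ] H) = H₀₀ ∧
      -- on H₁₀: T₂ is unitary, T₁ is an analytic 2-isometry
      (∀ x ∈ H₁₀, ‖T₂ x‖ = ‖x‖) ∧ H₁₀.map (T₂ : H →ₗ[ℂ] H) = H₁₀ ∧
      (⨅ n : ℕ, H₁₀.map ((T₁ ^ n : H →L[ℂ] H) : H →ₗ[ℂ] H)) = ⊥ ∧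
      -- on H₀₁: T₁ is unitary, T₂ is an analytic 2-isometry
      (∀ x ∈ H₀₁, ‖T₁ x‖ = ‖x‖) ∧ H₀₁.map (T₁ : H →ₗ[ℂ] H) = H₀₁ ∧
      (⨅ n : ℕ, H₀₁.map ((T₂ ^ n : H →L[ℂ] H) : H →ₗ[ℂ] H)) = ⊥ ∧
      -- on H₁₁: both T₁ and T₂ are analytic 2-isometries
      (⨅ n : ℕ, H₁₁.map ((T₁ ^ n : H →L[ℂ] H) : H →ₗ[ℂ] H)) = ⊥ ∧
      (⨅ n : ℕ, H₁₁.map ((T₂ ^ n : H →L[ℂ] H) : H →ₗ[ℂ] H)) = ⊥ := by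
  intro H00 H10 H01 H11 h00 h10 h01 h11
  subst h00 h10 h01 h11
  obtain ⟨R₁, hR1S, hS1R, hR1adj⟩ := exists_sinv T₁ h2iso₁
  obtain ⟨R₂, hR2S, hS2R, hR2adj⟩ := exists_sinv T₂ h2iso₂
  set E₁ : Submodule ℂ H := LinearMap.ker (((adjoint T₁ : H →L[ℂ] H) : H →ₗ[ℂ] H)) with hE₁def
  set E₂ : Submodule ℂ H := LinearMap.ker (((adjoint T₂ : H →L[ℂ] H) : H →ₗ[ℂ] H)) with hE₂def
  set U₁ : Submodule ℂ H := ⨅ n : ℕ, LinearMap.range (((T₁ ^ n : H →L[ℂ] H) : H →ₗ[ℂ] H)) with hU₁def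
  set U₂ : Submodule ℂ H := ⨅ n : ℕ, LinearMap.range (((T₂ ^ n : H →L[ℂ] H) : H →ₗ[ℂ] H)) with hU₂def
  set W₁ : Submodule ℂ H := (⨆ m : ℕ, E₁.map (((T₁ ^ m : H →L[ℂ] H) : H →ₗ[ℂ] H))).topologicalClosure with hW₁def
  set W₂ : Submodule ℂ H := (⨆ n : ℕ, E₂.map (((T₂ ^ n : H →L[ℂ] H) : H →ₗ[ℂ] H))).topologicalClosure with hW₂def
  set Hd : Submodule ℂ H :=
    ⨅ p : ℕ × ℕ, LinearMap.range (((T₁ ^ p.1) ∘L (T₂ ^ p.2) : H →L[ℂ] H) : H →ₗ[ℂ] H) with hHddef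
  set Hc : Submodule ℂ H :=
    (⨆ p : ℕ × ℕ, (E₁ ⊓ E₂).map (((T₁ ^ p.1) ∘L (T₂ ^ p.2) : H →L[ℂ] H) : H →ₗ[ℂ] H)).topologicalClosure with hHcdef
  -- pointwise commutation facts
  have c12 : ∀ x, T₁ (T₂ x) = T₂ (T₁ x) := fun x => by
    have h := DFunLike.congr_fun hcomm x; simpa using h
  have cA2T1 : ∀ x, T₁ (adjoint T₂ x) = adjoint T₂ (T₁ x) := fun x => by
    have h := DFunLike.congr_fun hdcomm x; simpa using h
  have hdcomm' : T₂ ∘L adjoint T₁ = adjoint T₁ ∘L T₂ := by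
    have h := congrArg ContinuousLinearMap.adjoint hdcomm
    simpa only [ContinuousLinearMap.adjoint_comp, ContinuousLinearMap.adjoint_adjoint] using h
  have cA1T2 : ∀ x, T₂ (adjoint T₁ x) = adjoint T₁ (T₂ x) := fun x => by
    have h := DFunLike.congr_fun hdcomm' x; simpa using h
  have hcommA : adjoint T₂ ∘L adjoint T₁ = adjoint T₁ ∘L adjoint T₂ := by
    have h := congrArg ContinuousLinearMap.adjoint hcomm
    simpa only [ContinuousLinearMap.adjoint_comp] using h
  have cA2A1 : ∀ x, adjoint T₂ (adjoint T₁ x) = adjoint T₁ (adjoint T₂ x) := fun x => by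
    have h := DFunLike.congr_fun hcommA x; simpa using h
  -- R commutation facts
  have cR2T1 : ∀ x, T₁ (R₂ x) = R₂ (T₁ x) := by
    apply commR ((adjoint T₂) ∘L T₂) R₂ hR2S hS2R
    intro x
    show T₁ (adjoint T₂ (T₂ x)) = adjoint T₂ (T₂ (T₁ x))
    rw [cA2T1, c12]
  have cR2A1 : ∀ x, adjoint T₁ (R₂ x) = R₂ (adjoint T₁ x) := by
    apply commR ((adjoint T₂) ∘L T₂) R₂ hR2S hS2R
    intro x
    show adjoint T₁ (adjoint T₂ (T₂ x)) = adjoint T₂ (T₂ (adjoint T₁ x))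
    rw [← cA2A1, ← cA1T2]
  have cR1A2 : ∀ x, adjoint T₂ (R₁ x) = R₁ (adjoint T₂ x) := by
    apply commR ((adjoint T₁) ∘L T₁) R₁ hR1S hS1R
    intro x
    show adjoint T₂ (adjoint T₁ (T₁ x)) = adjoint T₁ (T₁ (adjoint T₂ x))
    rw [cA2A1, ← cA2T1]
  -- closedness facts
  have hU₁closed : IsClosed (U₁ : Set H) := by
    rw [hU₁def, Submodule.coe_iInf]
    exact isClosed_iInter (fun n => isClosed_range_pow T₁ h2iso₁ n)
  have hU₂closed : IsClosed (U₂ : Set H) := by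
    rw [hU₂def, Submodule.coe_iInf]
    exact isClosed_iInter (fun n => isClosed_range_pow T₂ h2iso₂ n)
  have hW₁closed : IsClosed (W₁ : Set H) := Submodule.isClosed_topologicalClosure _
  have hW₂closed : IsClosed (W₂ : Set H) := Submodule.isClosed_topologicalClosure _
  have hHcclosed : IsClosed (Hc : Set H) := Submodule.isClosed_topologicalClosure _
  -- U invariances
  have hUinv1 : ∀ (B : H →L[ℂ] H), (∀ x, B (T₁ x) = T₁ (B x)) → ∀ x ∈ U₁, B x ∈ U₁ := by
    intro B hB x hx
    rw [hU₁def, Submodule.mem_iInf] at hx ⊢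
    intro n
    obtain ⟨y, hy⟩ := hx n
    exact ⟨B y, by rw [ContinuousLinearMap.coe_coe] at hy ⊢; rw [← comm_pow B T₁ hB n y, hy]⟩
  have hUinv2 : ∀ (B : H →L[ℂ] H), (∀ x, B (T₂ x) = T₂ (B x)) → ∀ x ∈ U₂, B x ∈ U₂ := by
    intro B hB x hx
    rw [hU₂def, Submodule.mem_iInf] at hx ⊢
    intro n
    obtain ⟨y, hy⟩ := hx n
    exact ⟨B y, by rw [ContinuousLinearMap.coe_coe] at hy ⊢; rw [← comm_pow B T₂ hB n y, hy]⟩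
  have hU₁T₁ : ∀ x ∈ U₁, T₁ x ∈ U₁ := fun x hx => TU T₁ h2iso₁ x hx
  have hU₂T₂ : ∀ x ∈ U₂, T₂ x ∈ U₂ := fun x hx => TU T₂ h2iso₂ x hx
  have hU₁adj : ∀ x ∈ U₁, adjoint T₁ x ∈ U₁ ∧ T₁ (adjoint T₁ x) = x :=
    fun x hx => adjU T₁ h2iso₁ x hx
  have hU₂adj : ∀ x ∈ U₂, adjoint T₂ x ∈ U₂ ∧ T₂ (adjoint T₂ x) = x :=
    fun x hx => adjU T₂ h2iso₂ x hx
  have hU₁T₂ : ∀ x ∈ U₁, T₂ x ∈ U₁ := hUinv1 T₂ (fun x => (c12 x).symm)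
  have hU₂T₁ : ∀ x ∈ U₂, T₁ x ∈ U₂ := hUinv2 T₁ c12
  have hU₁A₂ : ∀ x ∈ U₁, adjoint T₂ x ∈ U₁ := hUinv1 (adjoint T₂) (fun x => (cA2T1 x).symm)
  have hU₂A₁ : ∀ x ∈ U₂, adjoint T₁ x ∈ U₂ := hUinv2 (adjoint T₁) (fun x => (cA1T2 x).symm)
  have hU₁R₂ : ∀ x ∈ U₁, R₂ x ∈ U₁ := hUinv1 R₂ (fun x => (cR2T1 x).symm)
  -- W ≤ Uᗮ
  have hW1U1 : W₁ ≤ U₁ᗮ := by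
    rw [hW₁def]
    apply Submodule.topologicalClosure_minimal
    · apply iSup_le
      intro m
      rintro y hy
      rw [Submodule.mem_map] at hy
      obtain ⟨ev, hev, rfl⟩ := hy
      rw [Submodule.mem_orthogonal]
      intro u huU
      have h1 : (⟪u, (T₁ ^ m) ev⟫ : ℂ) = ⟪(adjoint (T₁ ^ m)) u, ev⟫ :=
        (ContinuousLinearMap.adjoint_inner_left (T₁ ^ m) ev u).symm
      rw [ContinuousLinearMap.coe_coe, h1]
      have h2 : adjoint (T₁ ^ m) = (adjoint T₁) ^ m := by
        rw [← ContinuousLinearMap.star_eq_adjoint, ← ContinuousLinearMap.star_eq_adjoint,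
          star_pow]
      rw [h2]
      have h3 : ((adjoint T₁) ^ m) u ∈ U₁ := (adj_pow_U T₁ h2iso₁ u huU m).1
      rw [hU₁def, Submodule.mem_iInf] at h3
      obtain ⟨w, hw⟩ := h3 1
      rw [pow_one, ContinuousLinearMap.coe_coe] at hw
      rw [← hw, ← ContinuousLinearMap.adjoint_inner_right]
      rw [hE₁def, LinearMap.mem_ker, ContinuousLinearMap.coe_coe] at hev
      rw [hev, inner_zero_right]
    · exact U₁.isClosed_orthogonal
  have hW2U2 : W₂ ≤ U₂ᗮ := by
    rw [hW₂def]
    apply Submodule.topologicalClosure_minimal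
    · apply iSup_le
      intro m
      rintro y hy
      rw [Submodule.mem_map] at hy
      obtain ⟨ev, hev, rfl⟩ := hy
      rw [Submodule.mem_orthogonal]
      intro u huU
      have h1 : (⟪u, (T₂ ^ m) ev⟫ : ℂ) = ⟪(adjoint (T₂ ^ m)) u, ev⟫ :=
        (ContinuousLinearMap.adjoint_inner_left (T₂ ^ m) ev u).symm
      rw [ContinuousLinearMap.coe_coe, h1]
      have h2 : adjoint (T₂ ^ m) = (adjoint T₂) ^ m := by
        rw [← ContinuousLinearMap.star_eq_adjoint, ← ContinuousLinearMap.star_eq_adjoint,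
          star_pow]
      rw [h2]
      have h3 : ((adjoint T₂) ^ m) u ∈ U₂ := (adj_pow_U T₂ h2iso₂ u huU m).1
      rw [hU₂def, Submodule.mem_iInf] at h3
      obtain ⟨w, hw⟩ := h3 1
      rw [pow_one, ContinuousLinearMap.coe_coe] at hw
      rw [← hw, ← ContinuousLinearMap.adjoint_inner_right]
      rw [hE₂def, LinearMap.mem_ker, ContinuousLinearMap.coe_coe] at hev
      rw [hev, inner_zero_right]
    · exact U₂.isClosed_orthogonal
  -- E invariances
  have hE1T2 : ∀ x ∈ E₁, T₂ x ∈ E₁ := by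
    intro x hx
    rw [hE₁def, LinearMap.mem_ker, ContinuousLinearMap.coe_coe] at hx ⊢
    rw [← cA1T2, hx, map_zero]
  have hE1A2 : ∀ x ∈ E₁, adjoint T₂ x ∈ E₁ := by
    intro x hx
    rw [hE₁def, LinearMap.mem_ker, ContinuousLinearMap.coe_coe] at hx ⊢
    rw [← cA2A1, hx, map_zero]
  have hE2T1 : ∀ x ∈ E₂, T₁ x ∈ E₂ := by
    intro x hx
    rw [hE₂def, LinearMap.mem_ker, ContinuousLinearMap.coe_coe] at hx ⊢
    rw [← cA2T1, hx, map_zero]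
  have hE2A1 : ∀ x ∈ E₂, adjoint T₁ x ∈ E₂ := by
    intro x hx
    rw [hE₂def, LinearMap.mem_ker, ContinuousLinearMap.coe_coe] at hx ⊢
    rw [cA2A1, hx, map_zero]
  have hE2R1 : ∀ x ∈ E₂, R₁ x ∈ E₂ := by
    intro x hx
    rw [hE₂def, LinearMap.mem_ker, ContinuousLinearMap.coe_coe] at hx ⊢
    rw [cR1A2, hx, map_zero]
  -- W generator invariances
  have hWsup1 : ∀ (B : H →L[ℂ] H), (∀ x, B (T₁ x) = T₁ (B x)) → (∀ x ∈ E₁, B x ∈ E₁) →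
      ∀ z ∈ W₁, B z ∈ W₁ := by
    intro B hB hE z hz
    rw [hW₁def] at hz ⊢
    refine mapClosure B _ _ ?_ z hz
    intro w hw
    refine mapSup B _ _ ?_ w hw
    intro m y hy
    rw [Submodule.mem_map] at hy
    obtain ⟨ev, hev, rfl⟩ := hy
    rw [ContinuousLinearMap.coe_coe, comm_pow B T₁ hB m ev]
    exact Submodule.mem_iSup_of_mem m (Submodule.mem_map_of_mem (hE ev hev))
  have hWsup2 : ∀ (B : H →L[ℂ] H), (∀ x, B (T₂ x) = T₂ (B x)) → (∀ x ∈ E₂, B x ∈ E₂) →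
      ∀ z ∈ W₂, B z ∈ W₂ := by
    intro B hB hE z hz
    rw [hW₂def] at hz ⊢
    refine mapClosure B _ _ ?_ z hz
    intro w hw
    refine mapSup B _ _ ?_ w hw
    intro m y hy
    rw [Submodule.mem_map] at hy
    obtain ⟨ev, hev, rfl⟩ := hy
    rw [ContinuousLinearMap.coe_coe, comm_pow B T₂ hB m ev]
    exact Submodule.mem_iSup_of_mem m (Submodule.mem_map_of_mem (hE ev hev))
  have hW1T2 : ∀ z ∈ W₁, T₂ z ∈ W₁ := hWsup1 T₂ (fun x => (c12 x).symm) hE1T2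
  have hW1A2 : ∀ z ∈ W₁, adjoint T₂ z ∈ W₁ := hWsup1 (adjoint T₂) (fun x => (cA2T1 x).symm) hE1A2
  have hW2T1 : ∀ z ∈ W₂, T₁ z ∈ W₂ := hWsup2 T₁ c12 hE2T1
  have hW2A1 : ∀ z ∈ W₂, adjoint T₁ z ∈ W₂ := hWsup2 (adjoint T₁) (fun x => (cA1T2 x).symm) hE2A1
  have hW1T1 : ∀ z ∈ W₁, T₁ z ∈ W₁ := by
    intro z hz
    rw [hW₁def] at hz ⊢
    refine mapClosure T₁ _ _ ?_ z hz
    intro w hw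
    refine mapSup T₁ _ _ ?_ w hw
    intro m y hy
    rw [Submodule.mem_map] at hy
    obtain ⟨ev, hev, rfl⟩ := hy
    rw [ContinuousLinearMap.coe_coe, ← pow_apply' T₁ m ev]
    exact Submodule.mem_iSup_of_mem (m+1) (Submodule.mem_map_of_mem hev)
  have hW2T2 : ∀ z ∈ W₂, T₂ z ∈ W₂ := by
    intro z hz
    rw [hW₂def] at hz ⊢
    refine mapClosure T₂ _ _ ?_ z hz
    intro w hw
    refine mapSup T₂ _ _ ?_ w hw
    intro m y hy
    rw [Submodule.mem_map] at hy
    obtain ⟨ev, hev, rfl⟩ := hy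
    rw [ContinuousLinearMap.coe_coe, ← pow_apply' T₂ m ev]
    exact Submodule.mem_iSup_of_mem (m+1) (Submodule.mem_map_of_mem hev)
  -- usage1 and Wᵢ = Uᵢᗮ
  have husage1 : ∀ x ∈ W₁ᗮ, x ∈ U₁ := by
    intro x hx
    rw [hU₁def, Submodule.mem_iInf]
    apply core_run T₁ h2iso₁ R₁ hS1R x
    intro k
    have hek : (((R₁ ∘L (adjoint T₁)) ^ k) x) - T₁ (((R₁ ∘L (adjoint T₁)) ^ (k+1)) x) ∈ E₁ := by
      rw [hE₁def, LinearMap.mem_ker]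
      exact core_eker T₁ R₁ hS1R x k
    have hmem : (T₁ ^ k) ((((R₁ ∘L (adjoint T₁)) ^ k) x)
        - T₁ (((R₁ ∘L (adjoint T₁)) ^ (k+1)) x)) ∈ W₁ := by
      rw [hW₁def]
      exact Submodule.le_topologicalClosure _
        (Submodule.mem_iSup_of_mem k (Submodule.mem_map_of_mem hek))
    rw [Submodule.mem_orthogonal'] at hx
    exact hx _ hmem
  have husage1' : ∀ x ∈ W₂ᗮ, x ∈ U₂ := by
    intro x hx
    rw [hU₂def, Submodule.mem_iInf]
    apply core_run T₂ h2iso₂ R₂ hS2R x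
    intro k
    have hek : (((R₂ ∘L (adjoint T₂)) ^ k) x) - T₂ (((R₂ ∘L (adjoint T₂)) ^ (k+1)) x) ∈ E₂ := by
      rw [hE₂def, LinearMap.mem_ker]
      exact core_eker T₂ R₂ hS2R x k
    have hmem : (T₂ ^ k) ((((R₂ ∘L (adjoint T₂)) ^ k) x)
        - T₂ (((R₂ ∘L (adjoint T₂)) ^ (k+1)) x)) ∈ W₂ := by
      rw [hW₂def]
      exact Submodule.le_topologicalClosure _
        (Submodule.mem_iSup_of_mem k (Submodule.mem_map_of_mem hek))
    rw [Submodule.mem_orthogonal'] at hx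
    exact hx _ hmem
  have hW1eq : U₁ᗮ = W₁ := by
    refine le_antisymm ?_ hW1U1
    intro z hz
    haveI : CompleteSpace W₁ := hW₁closed.completeSpace_coe
    have hq : (Submodule.orthogonalProjectionOnto W₁ z : H) ∈ W₁ := SetLike.coe_mem _
    have hzq : z - (Submodule.orthogonalProjectionOnto W₁ z : H) ∈ W₁ᗮ :=
      Submodule.sub_starProjection_mem_orthogonal z
    have hzqU : z - (Submodule.orthogonalProjectionOnto W₁ z : H) ∈ U₁ := husage1 _ hzq
    have h1 : (⟪z - (Submodule.orthogonalProjectionOnto W₁ z : H), z⟫ : ℂ) = 0 :=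
      (Submodule.mem_orthogonal U₁ z).mp hz _ hzqU
    have h2 : (⟪z - (Submodule.orthogonalProjectionOnto W₁ z : H), (Submodule.orthogonalProjectionOnto W₁ z : H)⟫ : ℂ) = 0 :=
      Submodule.inner_left_of_mem_orthogonal hq hzq
    have h3 : (⟪z - (Submodule.orthogonalProjectionOnto W₁ z : H),
        z - (Submodule.orthogonalProjectionOnto W₁ z : H)⟫ : ℂ) = 0 := by
      rw [inner_sub_right, h1, h2, sub_zero]
    have h4 : z - (Submodule.orthogonalProjectionOnto W₁ z : H) = 0 := inner_self_eq_zero.mp h3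
    have h5 : z = (Submodule.orthogonalProjectionOnto W₁ z : H) := by rwa [sub_eq_zero] at h4
    rw [h5]
    exact hq
  have hW2eq : U₂ᗮ = W₂ := by
    refine le_antisymm ?_ hW2U2
    intro z hz
    haveI : CompleteSpace W₂ := hW₂closed.completeSpace_coe
    have hq : (Submodule.orthogonalProjectionOnto W₂ z : H) ∈ W₂ := SetLike.coe_mem _
    have hzq : z - (Submodule.orthogonalProjectionOnto W₂ z : H) ∈ W₂ᗮ :=
      Submodule.sub_starProjection_mem_orthogonal z
    have hzqU : z - (Submodule.orthogonalProjectionOnto W₂ z : H) ∈ U₂ := husage1' _ hzq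
    have h1 : (⟪z - (Submodule.orthogonalProjectionOnto W₂ z : H), z⟫ : ℂ) = 0 :=
      (Submodule.mem_orthogonal U₂ z).mp hz _ hzqU
    have h2 : (⟪z - (Submodule.orthogonalProjectionOnto W₂ z : H), (Submodule.orthogonalProjectionOnto W₂ z : H)⟫ : ℂ) = 0 :=
      Submodule.inner_left_of_mem_orthogonal hq hzq
    have h3 : (⟪z - (Submodule.orthogonalProjectionOnto W₂ z : H),
        z - (Submodule.orthogonalProjectionOnto W₂ z : H)⟫ : ℂ) = 0 := by
      rw [inner_sub_right, h1, h2, sub_zero]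
    have h4 : z - (Submodule.orthogonalProjectionOnto W₂ z : H) = 0 := inner_self_eq_zero.mp h3
    have h5 : z = (Submodule.orthogonalProjectionOnto W₂ z : H) := by rwa [sub_eq_zero] at h4
    rw [h5]
    exact hq
  -- perp-style invariances of W₁, W₂
  have hWperpInv1 : ∀ (B C : H →L[ℂ] H), (∀ u z : H, (⟪u, B z⟫ : ℂ) = ⟪C u, z⟫) →
      (∀ u ∈ U₁, C u ∈ U₁) → ∀ z ∈ W₁, B z ∈ W₁ := by
    intro B C hBC hC z hz
    rw [← hW1eq] at hz ⊢
    rw [Submodule.mem_orthogonal] at hz ⊢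
    intro u hu
    rw [hBC u z]
    exact hz _ (hC u hu)
  have hWperpInv2 : ∀ (B C : H →L[ℂ] H), (∀ u z : H, (⟪u, B z⟫ : ℂ) = ⟪C u, z⟫) →
      (∀ u ∈ U₂, C u ∈ U₂) → ∀ z ∈ W₂, B z ∈ W₂ := by
    intro B C hBC hC z hz
    rw [← hW2eq] at hz ⊢
    rw [Submodule.mem_orthogonal] at hz ⊢
    intro u hu
    rw [hBC u z]
    exact hz _ (hC u hu)
  have hW1A1 : ∀ z ∈ W₁, adjoint T₁ z ∈ W₁ :=
    hWperpInv1 (adjoint T₁) T₁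
      (fun u z => ContinuousLinearMap.adjoint_inner_right T₁ u z) hU₁T₁
  have hW2A2 : ∀ z ∈ W₂, adjoint T₂ z ∈ W₂ :=
    hWperpInv2 (adjoint T₂) T₂
      (fun u z => ContinuousLinearMap.adjoint_inner_right T₂ u z) hU₂T₂
  have hW1R2 : ∀ z ∈ W₁, R₂ z ∈ W₁ :=
    hWperpInv1 R₂ R₂ (fun u z => (hR2adj u z).symm) hU₁R₂
  -- H00 = U₁ ⊓ U₂
  have hHdle1 : ∀ x ∈ Hd, x ∈ U₁ := by
    intro x hx
    rw [hHddef, Submodule.mem_iInf] at hx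
    rw [hU₁def, Submodule.mem_iInf]
    intro n
    obtain ⟨y, hy⟩ := hx (n, 0)
    exact ⟨y, by simpa using hy⟩
  have hHdle2 : ∀ x ∈ Hd, x ∈ U₂ := by
    intro x hx
    rw [hHddef, Submodule.mem_iInf] at hx
    rw [hU₂def, Submodule.mem_iInf]
    intro n
    obtain ⟨y, hy⟩ := hx (0, n)
    exact ⟨y, by simpa using hy⟩
  have hH00eq : Hd = U₁ ⊓ U₂ := by
    refine le_antisymm (fun x hx => ⟨hHdle1 x hx, hHdle2 x hx⟩) ?_
    intro x hx
    obtain ⟨hx1, hx2⟩ := hx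
    rw [hHddef, Submodule.mem_iInf]
    rintro ⟨m, n⟩
    have hb := adj_pow_U T₂ h2iso₂ x hx2 n
    have hbU1 : ((adjoint T₂) ^ n) x ∈ U₁ := pow_mem (adjoint T₂) U₁ hU₁A₂ n x hx1
    rw [hU₁def, Submodule.mem_iInf] at hbU1
    obtain ⟨c, hc⟩ := hbU1 m
    refine ⟨c, ?_⟩
    show (T₁ ^ m) ((T₂ ^ n) c) = x
    have hswap : (T₁ ^ m) ((T₂ ^ n) c) = (T₂ ^ n) ((T₁ ^ m) c) :=
      comm_pow (T₁ ^ m) T₂ (fun w => (comm_pow T₂ T₁ (fun u => (c12 u).symm) m w).symm) n c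
    rw [ContinuousLinearMap.coe_coe] at hc; rw [hswap, hc]
    exact hb.2
  -- the space V and the gap lemma
  set V : Submodule ℂ H := (⨆ m : ℕ, (E₁ ⊓ E₂).map (((T₁ ^ m : H →L[ℂ] H) : H →ₗ[ℂ] H))).topologicalClosure with hVdef
  have hVclosed : IsClosed (V : Set H) := Submodule.isClosed_topologicalClosure _
  have hVW1 : V ≤ W₁ := by
    rw [hVdef, hW₁def]
    apply Submodule.topologicalClosure_minimal
    · apply iSup_le
      intro m
      refine le_trans (Submodule.map_mono inf_le_left) ?_
      exact le_trans (le_iSup (fun m => E₁.map (((T₁ ^ m : H →L[ℂ] H) : H →ₗ[ℂ] H))) m) (Submodule.le_topologicalClosure _)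
    · exact Submodule.isClosed_topologicalClosure _
  have hE₂closed : IsClosed (E₂ : Set H) := by
    rw [hE₂def]
    exact isClosed_ker (adjoint T₂)
  have hVE2 : V ≤ E₂ := by
    rw [hVdef]
    apply Submodule.topologicalClosure_minimal
    · apply iSup_le
      intro m
      rintro y hy
      rw [Submodule.mem_map] at hy
      obtain ⟨ev, hev, rfl⟩ := hy
      exact pow_mem T₁ E₂ hE2T1 m ev hev.2
    · exact hE₂closed
  have hgap : ∀ x, x ∈ E₂ → x ∈ W₁ → x ∈ V := by
    intro x hxE hxW
    haveI : CompleteSpace V := hVclosed.completeSpace_coe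
    have hqV : (Submodule.orthogonalProjectionOnto V x : H) ∈ V := SetLike.coe_mem _
    have hxq : x - (Submodule.orthogonalProjectionOnto V x : H) ∈ Vᗮ :=
      Submodule.sub_starProjection_mem_orthogonal x
    have hrE : x - (Submodule.orthogonalProjectionOnto V x : H) ∈ E₂ :=
      Submodule.sub_mem _ hxE (hVE2 hqV)
    have hrW : x - (Submodule.orthogonalProjectionOnto V x : H) ∈ W₁ :=
      Submodule.sub_mem _ hxW (hVW1 hqV)
    have hrU : x - (Submodule.orthogonalProjectionOnto V x : H) ∈ U₁ := by
      rw [hU₁def, Submodule.mem_iInf]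
      apply core_run T₁ h2iso₁ R₁ hS1R _
      intro k
      have hvmem : ∀ j, (((R₁ ∘L (adjoint T₁)) ^ j) (x - (Submodule.orthogonalProjectionOnto V x : H))) ∈ E₂ :=
        core_vmem T₁ R₁ E₂ hE2A1 hE2R1 _ hrE
      have hekE1 : (((R₁ ∘L (adjoint T₁)) ^ k) (x - (Submodule.orthogonalProjectionOnto V x : H)))
          - T₁ (((R₁ ∘L (adjoint T₁)) ^ (k+1)) (x - (Submodule.orthogonalProjectionOnto V x : H))) ∈ E₁ := by
        rw [hE₁def, LinearMap.mem_ker]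
        exact core_eker T₁ R₁ hS1R _ k
      have hekE2 : (((R₁ ∘L (adjoint T₁)) ^ k) (x - (Submodule.orthogonalProjectionOnto V x : H)))
          - T₁ (((R₁ ∘L (adjoint T₁)) ^ (k+1)) (x - (Submodule.orthogonalProjectionOnto V x : H))) ∈ E₂ :=
        Submodule.sub_mem _ (hvmem k) (hE2T1 _ (hvmem (k+1)))
      have hmemV : (T₁ ^ k) ((((R₁ ∘L (adjoint T₁)) ^ k) (x - (Submodule.orthogonalProjectionOnto V x : H)))
          - T₁ (((R₁ ∘L (adjoint T₁)) ^ (k+1)) (x - (Submodule.orthogonalProjectionOnto V x : H)))) ∈ V :=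
        Submodule.le_topologicalClosure _
          (Submodule.mem_iSup_of_mem k (Submodule.mem_map_of_mem ⟨hekE1, hekE2⟩))
      rw [Submodule.mem_orthogonal'] at hxq
      exact hxq _ hmemV
    have h0 : (⟪x - (Submodule.orthogonalProjectionOnto V x : H), x - (Submodule.orthogonalProjectionOnto V x : H)⟫ : ℂ) = 0 :=
      Submodule.inner_right_of_mem_orthogonal hrU (hW1U1 hrW)
    have h4 : x - (Submodule.orthogonalProjectionOnto V x : H) = 0 := inner_self_eq_zero.mp h0
    have h5 : x = (Submodule.orthogonalProjectionOnto V x : H) := by rwa [sub_eq_zero] at h4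
    rw [h5]
    exact hqV
  -- Hc facts
  have hHcW1 : ∀ z ∈ Hc, z ∈ W₁ := by
    intro z hz
    rw [hHcdef] at hz
    rw [hW₁def]
    have hle : (⨆ p : ℕ × ℕ, (E₁ ⊓ E₂).map (((T₁ ^ p.1) ∘L (T₂ ^ p.2) : H →L[ℂ] H) : H →ₗ[ℂ] H))
        ≤ (⨆ m : ℕ, E₁.map (((T₁ ^ m : H →L[ℂ] H) : H →ₗ[ℂ] H))) := by
      apply iSup_le
      rintro ⟨m, n⟩
      rintro y hy
      rw [Submodule.mem_map] at hy
      obtain ⟨ev, hev, rfl⟩ := hy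
      show (T₁ ^ m) ((T₂ ^ n) ev) ∈ _
      have h1 : (T₂ ^ n) ev ∈ E₁ := pow_mem T₂ E₁ hE1T2 n ev hev.1
      exact Submodule.mem_iSup_of_mem m (Submodule.mem_map_of_mem h1)
    exact Submodule.topologicalClosure_mono hle hz
  have hHcW2 : ∀ z ∈ Hc, z ∈ W₂ := by
    intro z hz
    rw [hHcdef] at hz
    rw [hW₂def]
    have hle : (⨆ p : ℕ × ℕ, (E₁ ⊓ E₂).map (((T₁ ^ p.1) ∘L (T₂ ^ p.2) : H →L[ℂ] H) : H →ₗ[ℂ] H))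
        ≤ (⨆ m : ℕ, E₂.map (((T₂ ^ m : H →L[ℂ] H) : H →ₗ[ℂ] H))) := by
      apply iSup_le
      rintro ⟨m, n⟩
      rintro y hy
      rw [Submodule.mem_map] at hy
      obtain ⟨ev, hev, rfl⟩ := hy
      show (T₁ ^ m) ((T₂ ^ n) ev) ∈ _
      have hswap : (T₁ ^ m) ((T₂ ^ n) ev) = (T₂ ^ n) ((T₁ ^ m) ev) :=
        comm_pow (T₁ ^ m) T₂ (fun w => (comm_pow T₂ T₁ (fun u => (c12 u).symm) m w).symm) n ev
      rw [hswap]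
      have h1 : (T₁ ^ m) ev ∈ E₂ := pow_mem T₁ E₂ hE2T1 m ev hev.2
      exact Submodule.mem_iSup_of_mem n (Submodule.mem_map_of_mem h1)
    exact Submodule.topologicalClosure_mono hle hz
  have hT2kV : ∀ (k : ℕ), ∀ z ∈ V, (T₂ ^ k) z ∈ Hc := by
    intro k z hz
    rw [hVdef] at hz
    rw [hHcdef]
    refine mapClosure (T₂ ^ k) _ _ ?_ z hz
    intro w hw
    refine mapSup (T₂ ^ k) _ _ ?_ w hw
    intro m y hy
    rw [Submodule.mem_map] at hy
    obtain ⟨ev, hev, rfl⟩ := hy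
    have hswap : (T₂ ^ k) ((T₁ ^ m) ev) = (T₁ ^ m) ((T₂ ^ k) ev) :=
      comm_pow (T₂ ^ k) T₁ (fun w => (comm_pow T₁ T₂ c12 k w).symm) m ev
    rw [ContinuousLinearMap.coe_coe, hswap]
    exact Submodule.mem_iSup_of_mem (m, k) (Submodule.mem_map_of_mem hev)
  -- core runs
  have hcore3 : ∀ r, r ∈ W₁ → r ∈ Hcᗮ → r ∈ U₂ := by
    intro r hrW hrperp
    rw [hU₂def, Submodule.mem_iInf]
    apply core_run T₂ h2iso₂ R₂ hS2R r
    intro k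
    have hvmem : ∀ j, (((R₂ ∘L (adjoint T₂)) ^ j) r) ∈ W₁ :=
      core_vmem T₂ R₂ W₁ hW1A2 hW1R2 r hrW
    have heE2 : (((R₂ ∘L (adjoint T₂)) ^ k) r) - T₂ (((R₂ ∘L (adjoint T₂)) ^ (k+1)) r) ∈ E₂ := by
      rw [hE₂def, LinearMap.mem_ker]
      exact core_eker T₂ R₂ hS2R r k
    have heW1 : (((R₂ ∘L (adjoint T₂)) ^ k) r) - T₂ (((R₂ ∘L (adjoint T₂)) ^ (k+1)) r) ∈ W₁ :=
      Submodule.sub_mem _ (hvmem k) (hW1T2 _ (hvmem (k+1)))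
    have heV := hgap _ heE2 heW1
    have hmem := hT2kV k _ heV
    rw [Submodule.mem_orthogonal'] at hrperp
    exact hrperp _ hmem
  have hcore2 : ∀ r, r ∈ U₁ → r ∈ (W₂ ⊓ U₁)ᗮ → r ∈ U₂ := by
    intro r hrU hrperp
    rw [hU₂def, Submodule.mem_iInf]
    apply core_run T₂ h2iso₂ R₂ hS2R r
    intro k
    have hvmem : ∀ j, (((R₂ ∘L (adjoint T₂)) ^ j) r) ∈ U₁ :=
      core_vmem T₂ R₂ U₁ hU₁A₂ hU₁R₂ r hrU
    have heE2 : (((R₂ ∘L (adjoint T₂)) ^ k) r) - T₂ (((R₂ ∘L (adjoint T₂)) ^ (k+1)) r) ∈ E₂ := by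
      rw [hE₂def, LinearMap.mem_ker]
      exact core_eker T₂ R₂ hS2R r k
    have heU1 : (((R₂ ∘L (adjoint T₂)) ^ k) r) - T₂ (((R₂ ∘L (adjoint T₂)) ^ (k+1)) r) ∈ U₁ :=
      Submodule.sub_mem _ (hvmem k) (hU₁T₂ _ (hvmem (k+1)))
    have hmem : (T₂ ^ k) ((((R₂ ∘L (adjoint T₂)) ^ k) r)
        - T₂ (((R₂ ∘L (adjoint T₂)) ^ (k+1)) r)) ∈ W₂ ⊓ U₁ := by
      constructor
      · rw [hW₂def]
        exact Submodule.le_topologicalClosure _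
          (Submodule.mem_iSup_of_mem k (Submodule.mem_map_of_mem heE2))
      · exact pow_mem T₂ U₁ hU₁T₂ k _ heU1
    rw [Submodule.mem_orthogonal'] at hrperp
    exact hrperp _ hmem
  -- fullness
  have hW2U1closed : IsClosed ((W₂ ⊓ U₁ : Submodule ℂ H) : Set H) := by
    rw [Submodule.coe_inf]
    exact hW₂closed.inter hU₁closed
  have hHcclosed' : IsClosed (Hc : Set H) := hHcclosed
  have hU1le : U₁ ≤ Hd ⊔ (W₂ ⊓ U₁) := by
    intro z hz
    haveI : CompleteSpace (W₂ ⊓ U₁ : Submodule ℂ H) := hW2U1closed.completeSpace_coe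
    have hqm : (Submodule.orthogonalProjectionOnto (W₂ ⊓ U₁) z : H) ∈ W₂ ⊓ U₁ := SetLike.coe_mem _
    have hzq : z - (Submodule.orthogonalProjectionOnto (W₂ ⊓ U₁) z : H) ∈ (W₂ ⊓ U₁)ᗮ :=
      Submodule.sub_starProjection_mem_orthogonal z
    have hzqU1 : z - (Submodule.orthogonalProjectionOnto (W₂ ⊓ U₁) z : H) ∈ U₁ :=
      Submodule.sub_mem _ hz hqm.2
    have hrU2 := hcore2 _ hzqU1 hzq
    have hrHd : z - (Submodule.orthogonalProjectionOnto (W₂ ⊓ U₁) z : H) ∈ Hd := by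
      rw [hH00eq]
      exact ⟨hzqU1, hrU2⟩
    have hzdec : z = (z - (Submodule.orthogonalProjectionOnto (W₂ ⊓ U₁) z : H))
        + (Submodule.orthogonalProjectionOnto (W₂ ⊓ U₁) z : H) := by abel
    rw [hzdec]
    exact Submodule.add_mem_sup hrHd hqm
  have hW1le : W₁ ≤ (W₁ ⊓ U₂) ⊔ Hc := by
    intro z hz
    haveI : CompleteSpace Hc := hHcclosed.completeSpace_coe
    have hqm : (Submodule.orthogonalProjectionOnto Hc z : H) ∈ Hc := SetLike.coe_mem _
    have hzq : z - (Submodule.orthogonalProjectionOnto Hc z : H) ∈ Hcᗮ :=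
      Submodule.sub_starProjection_mem_orthogonal z
    have hzqW1 : z - (Submodule.orthogonalProjectionOnto Hc z : H) ∈ W₁ :=
      Submodule.sub_mem _ hz (hHcW1 _ hqm)
    have hrU2 := hcore3 _ hzqW1 hzq
    have hzdec : z = (z - (Submodule.orthogonalProjectionOnto Hc z : H))
        + (Submodule.orthogonalProjectionOnto Hc z : H) := by abel
    rw [hzdec]
    exact Submodule.add_mem_sup ⟨hzqW1, hrU2⟩ hqm
  have hfull : Hd ⊔ (W₁ ⊓ U₂) ⊔ (W₂ ⊓ U₁) ⊔ Hc = ⊤ := by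
    rw [eq_top_iff]
    haveI : CompleteSpace U₁ := hU₁closed.completeSpace_coe
    have htop : U₁ ⊔ U₁ᗮ = ⊤ := Submodule.sup_orthogonal_of_hasOrthogonalProjection
    rw [← htop]
    apply sup_le
    · refine le_trans hU1le (sup_le ?_ ?_)
      · exact le_trans le_sup_left (le_trans le_sup_left le_sup_left)
      · exact le_trans le_sup_right le_sup_left
    · rw [hW1eq]
      refine le_trans hW1le (sup_le ?_ ?_)
      · exact le_trans le_sup_right (le_trans le_sup_left le_sup_left)
      · exact le_sup_right
  have hH11eq : Hc = W₁ ⊓ W₂ := by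
    refine le_antisymm (fun z hz => ⟨hHcW1 z hz, hHcW2 z hz⟩) ?_
    intro z hz
    haveI : CompleteSpace Hc := hHcclosed.completeSpace_coe
    have hqm : (Submodule.orthogonalProjectionOnto Hc z : H) ∈ Hc := SetLike.coe_mem _
    have hzq : z - (Submodule.orthogonalProjectionOnto Hc z : H) ∈ Hcᗮ :=
      Submodule.sub_starProjection_mem_orthogonal z
    have hzqW1 : z - (Submodule.orthogonalProjectionOnto Hc z : H) ∈ W₁ :=
      Submodule.sub_mem _ hz.1 (hHcW1 _ hqm)
    have hzqW2 : z - (Submodule.orthogonalProjectionOnto Hc z : H) ∈ W₂ :=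
      Submodule.sub_mem _ hz.2 (hHcW2 _ hqm)
    have hrU2 := hcore3 _ hzqW1 hzq
    have h0 : (⟪z - (Submodule.orthogonalProjectionOnto Hc z : H), z - (Submodule.orthogonalProjectionOnto Hc z : H)⟫ : ℂ) = 0 :=
      Submodule.inner_right_of_mem_orthogonal hrU2 (hW2U2 hzqW2)
    have h4 : z - (Submodule.orthogonalProjectionOnto Hc z : H) = 0 := inner_self_eq_zero.mp h0
    have h5 : z = (Submodule.orthogonalProjectionOnto Hc z : H) := by rwa [sub_eq_zero] at h4
    rw [h5]
    exact hqm
  -- per-piece invariances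
  have hHdT₁ : ∀ x ∈ Hd, T₁ x ∈ Hd := by
    intro x hx
    rw [hH00eq] at hx ⊢
    exact ⟨hU₁T₁ _ hx.1, hU₂T₁ _ hx.2⟩
  have hHdA₁ : ∀ x ∈ Hd, adjoint T₁ x ∈ Hd := by
    intro x hx
    rw [hH00eq] at hx ⊢
    exact ⟨(hU₁adj _ hx.1).1, hU₂A₁ _ hx.2⟩
  have hHdT₂ : ∀ x ∈ Hd, T₂ x ∈ Hd := by
    intro x hx
    rw [hH00eq] at hx ⊢
    exact ⟨hU₁T₂ _ hx.1, hU₂T₂ _ hx.2⟩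
  have hHdA₂ : ∀ x ∈ Hd, adjoint T₂ x ∈ Hd := by
    intro x hx
    rw [hH00eq] at hx ⊢
    exact ⟨hU₁A₂ _ hx.1, (hU₂adj _ hx.2).1⟩
  have h10T₁ : ∀ x ∈ W₁ ⊓ U₂, T₁ x ∈ W₁ ⊓ U₂ :=
    fun x hx => ⟨hW1T1 _ hx.1, hU₂T₁ _ hx.2⟩
  have h10A₁ : ∀ x ∈ W₁ ⊓ U₂, adjoint T₁ x ∈ W₁ ⊓ U₂ :=
    fun x hx => ⟨hW1A1 _ hx.1, hU₂A₁ _ hx.2⟩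
  have h10T₂ : ∀ x ∈ W₁ ⊓ U₂, T₂ x ∈ W₁ ⊓ U₂ :=
    fun x hx => ⟨hW1T2 _ hx.1, hU₂T₂ _ hx.2⟩
  have h10A₂ : ∀ x ∈ W₁ ⊓ U₂, adjoint T₂ x ∈ W₁ ⊓ U₂ :=
    fun x hx => ⟨hW1A2 _ hx.1, (hU₂adj _ hx.2).1⟩
  have h01T₁ : ∀ x ∈ W₂ ⊓ U₁, T₁ x ∈ W₂ ⊓ U₁ :=
    fun x hx => ⟨hW2T1 _ hx.1, hU₁T₁ _ hx.2⟩
  have h01A₁ : ∀ x ∈ W₂ ⊓ U₁, adjoint T₁ x ∈ W₂ ⊓ U₁ :=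
    fun x hx => ⟨hW2A1 _ hx.1, (hU₁adj _ hx.2).1⟩
  have h01T₂ : ∀ x ∈ W₂ ⊓ U₁, T₂ x ∈ W₂ ⊓ U₁ :=
    fun x hx => ⟨hW2T2 _ hx.1, hU₁T₂ _ hx.2⟩
  have h01A₂ : ∀ x ∈ W₂ ⊓ U₁, adjoint T₂ x ∈ W₂ ⊓ U₁ :=
    fun x hx => ⟨hW2A2 _ hx.1, hU₁A₂ _ hx.2⟩
  have h11T₁ : ∀ x ∈ Hc, T₁ x ∈ Hc := by
    intro x hx
    rw [hH11eq] at hx ⊢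
    exact ⟨hW1T1 _ hx.1, hW2T1 _ hx.2⟩
  have h11A₁ : ∀ x ∈ Hc, adjoint T₁ x ∈ Hc := by
    intro x hx
    rw [hH11eq] at hx ⊢
    exact ⟨hW1A1 _ hx.1, hW2A1 _ hx.2⟩
  have h11T₂ : ∀ x ∈ Hc, T₂ x ∈ Hc := by
    intro x hx
    rw [hH11eq] at hx ⊢
    exact ⟨hW1T2 _ hx.1, hW2T2 _ hx.2⟩
  have h11A₂ : ∀ x ∈ Hc, adjoint T₂ x ∈ Hc := by
    intro x hx
    rw [hH11eq] at hx ⊢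
    exact ⟨hW1A2 _ hx.1, hW2A2 _ hx.2⟩
  -- orthogonality helpers
  have ortho1 : ∀ {x y : H}, x ∈ U₁ → y ∈ W₁ → (⟪x, y⟫ : ℂ) = 0 :=
    fun hx hy => Submodule.inner_right_of_mem_orthogonal hx (hW1U1 hy)
  have ortho2 : ∀ {x y : H}, x ∈ U₂ → y ∈ W₂ → (⟪x, y⟫ : ℂ) = 0 :=
    fun hx hy => Submodule.inner_right_of_mem_orthogonal hx (hW2U2 hy)
  refine ⟨?_, ?_, ?_, ?_, ?_, ?_, hfull, hHdT₁, hHdA₁, hHdT₂, hHdA₂,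
    h10T₁, h10A₁, h10T₂, h10A₂, h01T₁, h01A₁, h01T₂, h01A₂,
    h11T₁, h11A₁, h11T₂, h11A₂, ?_, ?_, ?_, ?_, ?_, ?_, ?_, ?_, ?_, ?_, ?_, ?_⟩
  · intro x hx y hy
    exact ortho1 (hHdle1 x hx) hy.1
  · intro x hx y hy
    exact ortho2 (hHdle2 x hx) hy.1
  · intro x hx y hy
    exact ortho1 (hHdle1 x hx) (hHcW1 y hy)
  · intro x hx y hy
    exact ortho2 hx.2 hy.1
  · intro x hx y hy
    exact ortho2 hx.2 (hHcW2 y hy)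
  · intro x hx y hy
    exact ortho1 hx.2 (hHcW1 y hy)
  -- ‖T₁ x‖ = ‖x‖ on H00
  · intro x hx
    exact normU T₁ h2iso₁ x (hHdle1 x hx)
  -- H00.map T₁ = H00
  · refine le_antisymm ?_ ?_
    · intro y hy
      rw [Submodule.mem_map] at hy
      obtain ⟨x, hx, rfl⟩ := hy
      exact hHdT₁ x hx
    · intro x hx
      exact Submodule.mem_map.mpr ⟨adjoint T₁ x, hHdA₁ x hx, (hU₁adj x (hHdle1 x hx)).2⟩
  · intro x hx
    exact normU T₂ h2iso₂ x (hHdle2 x hx)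
  · refine le_antisymm ?_ ?_
    · intro y hy
      rw [Submodule.mem_map] at hy
      obtain ⟨x, hx, rfl⟩ := hy
      exact hHdT₂ x hx
    · intro x hx
      exact Submodule.mem_map.mpr ⟨adjoint T₂ x, hHdA₂ x hx, (hU₂adj x (hHdle2 x hx)).2⟩
  -- on H10 : T₂ unitary
  · intro x hx
    exact normU T₂ h2iso₂ x hx.2
  · refine le_antisymm ?_ ?_
    · intro y hy
      rw [Submodule.mem_map] at hy
      obtain ⟨x, hx, rfl⟩ := hy
      exact h10T₂ x hx
    · intro x hx
      exact Submodule.mem_map.mpr ⟨adjoint T₂ x, h10A₂ x hx, (hU₂adj x hx.2).2⟩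
  -- analytic: ⨅ (W₁ ⊓ U₂).map T₁^n = ⊥
  · rw [eq_bot_iff]
    intro x hx
    rw [Submodule.mem_iInf] at hx
    have h0 := hx 0
    rw [Submodule.mem_map] at h0
    obtain ⟨y, hy, hyx⟩ := h0
    have hxy : x = y := by simpa using hyx.symm
    have hxW1 : x ∈ W₁ := by rw [hxy]; exact hy.1
    have hxU1 : x ∈ U₁ := by
      rw [hU₁def, Submodule.mem_iInf]
      intro n
      have hn := hx n
      rw [Submodule.mem_map] at hn
      obtain ⟨y', _, rfl⟩ := hn
      exact ⟨y', rfl⟩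
    have h00 : (⟪x, x⟫ : ℂ) = 0 :=
      Submodule.inner_right_of_mem_orthogonal hxU1 (hW1U1 hxW1)
    rw [Submodule.mem_bot]
    exact inner_self_eq_zero.mp h00
  -- on H01 : T₁ unitary
  · intro x hx
    exact normU T₁ h2iso₁ x hx.2
  · refine le_antisymm ?_ ?_
    · intro y hy
      rw [Submodule.mem_map] at hy
      obtain ⟨x, hx, rfl⟩ := hy
      exact h01T₁ x hx
    · intro x hx
      exact Submodule.mem_map.mpr ⟨adjoint T₁ x, h01A₁ x hx, (hU₁adj x hx.2).2⟩
  · rw [eq_bot_iff]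
    intro x hx
    rw [Submodule.mem_iInf] at hx
    have h0 := hx 0
    rw [Submodule.mem_map] at h0
    obtain ⟨y, hy, hyx⟩ := h0
    have hxy : x = y := by simpa using hyx.symm
    have hxW2 : x ∈ W₂ := by rw [hxy]; exact hy.1
    have hxU2 : x ∈ U₂ := by
      rw [hU₂def, Submodule.mem_iInf]
      intro n
      have hn := hx n
      rw [Submodule.mem_map] at hn
      obtain ⟨y', _, rfl⟩ := hn
      exact ⟨y', rfl⟩
    have h00 : (⟪x, x⟫ : ℂ) = 0 :=
      Submodule.inner_right_of_mem_orthogonal hxU2 (hW2U2 hxW2)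
    rw [Submodule.mem_bot]
    exact inner_self_eq_zero.mp h00
  -- H11 analytic for T₁
  · rw [eq_bot_iff]
    intro x hx
    rw [Submodule.mem_iInf] at hx
    have h0 := hx 0
    rw [Submodule.mem_map] at h0
    obtain ⟨y, hy, hyx⟩ := h0
    have hxy : x = y := by simpa using hyx.symm
    have hxW1 : x ∈ W₁ := hHcW1 x (by rw [hxy]; exact hy)
    have hxU1 : x ∈ U₁ := by
      rw [hU₁def, Submodule.mem_iInf]
      intro n
      have hn := hx n
      rw [Submodule.mem_map] at hn
      obtain ⟨y', _, rfl⟩ := hn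
      exact ⟨y', rfl⟩
    have h00 : (⟪x, x⟫ : ℂ) = 0 :=
      Submodule.inner_right_of_mem_orthogonal hxU1 (hW1U1 hxW1)
    rw [Submodule.mem_bot]
    exact inner_self_eq_zero.mp h00
  -- H11 analytic for T₂
  · rw [eq_bot_iff]
    intro x hx
    rw [Submodule.mem_iInf] at hx
    have h0 := hx 0
    rw [Submodule.mem_map] at h0
    obtain ⟨y, hy, hyx⟩ := h0
    have hxy : x = y := by simpa using hyx.symm
    have hxW2 : x ∈ W₂ := hHcW2 x (by rw [hxy]; exact hy)
    have hxU2 : x ∈ U₂ := by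
      rw [hU₂def, Submodule.mem_iInf]
      intro n
      have hn := hx n
      rw [Submodule.mem_map] at hn
      obtain ⟨y', _, rfl⟩ := hn
      exact ⟨y', rfl⟩
    have h00 : (⟪x, x⟫ : ℂ) = 0 :=
      Submodule.inner_right_of_mem_orthogonal hxU2 (hW2U2 hxW2)
    rw [Submodule.mem_bot]
    exact inner_self_eq_zero.mp h00
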